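/- Let $0<p<1$ and let $\{X_{\mathbf{n}}, \mathbf{n} \in \mathbb{Z}^d_+\}$ be a $d$-dimensional array of random vectors taking values in a real separable Hilbert space $\mathcal{H}$. If $\{\|X_{\mathbf{n}}\|^p\}$ is uniformly integrable in the Cesàro sense, then $|\mathbf{n}|^{-1/p}\max_{\mathbf{1}\prec\mathbf{k}\prec\mathbf{n}}\|\sum_{\mathbf{i}\prec\mathbf{k}} X_{\mathbf{i}}\| \to 0$ in $L_p$ as $|\mathbf{n}|\to\infty$, i.e., $\mathbb{E}\big(|\mathbf{n}|^{-1/p}\max_{\mathbf{1}\prec\mathbf{k}\prec\mathbf{n}}\|\sum_{\mathbf{i}\prec\mathbf{k}} X_{\mathbf{i}}\|\big)^p \to 0$. No dependence structure is assumed. -/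

import Mathlib

open MeasureTheory Filter Finset

private lemma my_rpow_add_le {p a b : ℝ} (hp : 0 ≤ p) (hp1 : p ≤ 1)
    (ha : 0 ≤ a) (hb : 0 ≤ b) : (a + b) ^ p ≤ a ^ p + b ^ p := by
  have h := NNReal.rpow_add_le_add_rpow (⟨a, ha⟩ : NNReal) ⟨b, hb⟩ hp hp1
  have h2 := NNReal.coe_le_coe.2 h
  exact h2

private lemma my_rpow_sum_le {ι : Type*} {p : ℝ} (hp : 0 < p) (hp1 : p ≤ 1)
    (s : Finset ι) (f : ι → ℝ) (hf : ∀ i ∈ s, 0 ≤ f i) :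
    (∑ i ∈ s, f i) ^ p ≤ ∑ i ∈ s, f i ^ p := by
  classical
  induction s using Finset.cons_induction with
  | empty => simp [Real.zero_rpow hp.ne']
  | cons i s hi ih =>
    rw [Finset.sum_cons, Finset.sum_cons]
    have h1 : 0 ≤ f i := hf i (Finset.mem_cons_self _ _)
    have h2 : ∀ j ∈ s, 0 ≤ f j := fun j hj => hf j (Finset.mem_cons_of_mem hj)
    calc (f i + ∑ j ∈ s, f j) ^ p ≤ f i ^ p + (∑ j ∈ s, f j) ^ p :=
          my_rpow_add_le hp.le hp1 h1 (Finset.sum_nonneg h2)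
      _ ≤ f i ^ p + ∑ j ∈ s, f j ^ p := by linarith [ih h2]

/-- Theorem 2.1: L_p convergence (0<p<1) of maximal normed partial sums for d-dimensional
arrays of Hilbert-space-valued random vectors whose p-th norm powers are Cesàro uniformly
integrable; no dependence assumption. -/
theorem lp_convergence_maximal_sums_zero_lt_p_lt_one
    {Ω H : Type*} [MeasurableSpace Ω]
    [NormedAddCommGroup H] [InnerProductSpace ℝ H] [CompleteSpace H]
    [SecondCountableTopology H] [MeasurableSpace H] [BorelSpace H]
    (P : Measure Ω) [IsProbabilityMeasure P]
    (d : ℕ) (hd : 0 < d) (p : ℝ) (hp0 : 0 < p) (hp1 : p < 1)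
    (X : (Fin d → ℕ) → Ω → H)
    (hmeas : ∀ i, Measurable (X i))
    (hint : ∀ i, Integrable (fun ω => ‖X i ω‖ ^ p) P)
    -- Cesàro uniform integrability of {‖X_n‖^p}
    (hUI : ∀ ε > (0 : ℝ), ∃ a : ℝ, 0 < a ∧ ∀ b ≥ a, ∀ n : Fin d → ℕ, (∀ j, 1 ≤ n j) →
      (1 / ∏ j, (n j : ℝ)) * ∑ i ∈ Finset.Icc 1 n,
        ∫ ω, Set.indicator {ω | b < ‖X i ω‖ ^ p} (fun ω => ‖X i ω‖ ^ p) ω ∂P ≤ ε) :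
    -- L_p convergence as |n| → ∞
    ∀ ε > (0 : ℝ), ∃ N : ℕ, ∀ n : Fin d → ℕ, (∀ j, 1 ≤ n j) → N ≤ ∏ j, n j →
      ∫ ω, ((((Finset.Icc 1 n).sup fun k =>
          ‖∑ i ∈ Finset.Icc 1 k, X i ω‖₊ : NNReal) : ℝ) /
        (∏ j, (n j : ℝ)) ^ (1 / p)) ^ p ∂P < ε := by
  intro ε hε
  obtain ⟨a, ha, hUIa⟩ := hUI (ε / 2) (by linarith)
  obtain ⟨N₀, hN₀⟩ := exists_nat_gt ((2 * a / ε) ^ (1 / (1 - p)))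
  refine ⟨N₀ + 1, ?_⟩
  intro n hn hNn
  set m : ℝ := ∏ j, (n j : ℝ) with hmdef
  have hm1 : 1 ≤ m := by
    rw [hmdef]
    exact_mod_cast Finset.one_le_prod' (fun (j : Fin d) (_ : j ∈ Finset.univ) => hn j)
  have hm0 : (0 : ℝ) < m := lt_of_lt_of_le one_pos hm1
  have hmN : ((2 * a / ε) ^ (1 / (1 - p)) : ℝ) < m := by
    have : ((N₀ : ℝ) + 1) ≤ m := by
      have : ((N₀ + 1 : ℕ) : ℝ) ≤ ((∏ j, n j : ℕ) : ℝ) := by exact_mod_cast hNn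
      simpa [Nat.cast_prod] using this
    linarith
  -- the key smallness of the truncation term
  have hsmall : a * m ^ (p - 1) < ε / 2 := by
    have h2a : (0 : ℝ) < 2 * a / ε := by positivity
    have h1p : (0 : ℝ) < 1 - p := by linarith
    have hmono : 2 * a / ε < m ^ (1 - p) := by
      have h := Real.rpow_lt_rpow (Real.rpow_nonneg h2a.le _) hmN h1p
      rwa [← Real.rpow_mul h2a.le, one_div_mul_cancel h1p.ne', Real.rpow_one] at h
    have hpos : (0 : ℝ) < m ^ (1 - p) := lt_trans h2a hmono
    have hlt : 2 * a < ε * m ^ (1 - p) := by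
      have h := (div_lt_iff₀ hε).mp hmono
      nlinarith
    calc a * m ^ (p - 1) = a / m ^ (1 - p) := by
          rw [show p - 1 = -(1 - p) by ring, Real.rpow_neg hm0.le, div_eq_mul_inv]
      _ < ε / 2 := by rw [div_lt_iff₀ hpos]; nlinarith
  -- indicator functions and their integrability
  set S : (Fin d → ℕ) → Set Ω := fun i => {ω | a < ‖X i ω‖ ^ p} with hSdef
  have hSmeas : ∀ i, MeasurableSet (S i) := fun i =>
    measurableSet_lt measurable_const
      ((Real.continuous_rpow_const hp0.le).measurable.comp (hmeas i).norm)
  set ind : (Fin d → ℕ) → Ω → ℝ :=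
    fun i => Set.indicator (S i) (fun ω => ‖X i ω‖ ^ p) with hinddef
  have hindInt : ∀ i, Integrable (ind i) P := fun i => (hint i).indicator (hSmeas i)
  have hindNonneg : ∀ i ω, 0 ≤ ind i ω := fun i ω =>
    Set.indicator_nonneg (fun ω _ => Real.rpow_nonneg (norm_nonneg _) p) ω
  set g : Ω → ℝ := fun ω => a * m ^ (p - 1) + (1 / m) * ∑ i ∈ Finset.Icc 1 n, ind i ω
    with hgdef
  have hgInt : Integrable g P :=
    (integrable_const _).add
      ((integrable_finset_sum _ (fun i _ => hindInt i)).const_mul _)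
  -- pointwise bound
  have hptwise : ∀ ω,
      ((((Finset.Icc 1 n).sup fun k =>
          ‖∑ i ∈ Finset.Icc 1 k, X i ω‖₊ : NNReal) : ℝ) / m ^ (1 / p)) ^ p ≤ g ω := by
    intro ω
    set M : ℝ := (((Finset.Icc 1 n).sup fun k =>
        ‖∑ i ∈ Finset.Icc 1 k, X i ω‖₊ : NNReal) : ℝ) with hMdef
    have hM0 : 0 ≤ M := NNReal.coe_nonneg _
    -- M ≤ total sum of norms
    have hMle : M ≤ ∑ i ∈ Finset.Icc 1 n, ‖X i ω‖ := by
      have : ((Finset.Icc 1 n).sup fun k => ‖∑ i ∈ Finset.Icc 1 k, X i ω‖₊)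
          ≤ ∑ i ∈ Finset.Icc 1 n, ‖X i ω‖₊ := by
        refine Finset.sup_le fun k hk => ?_
        refine le_trans (nnnorm_sum_le _ _) ?_
        exact Finset.sum_le_sum_of_subset
          (Finset.Icc_subset_Icc_right (Finset.mem_Icc.1 hk).2)
      calc M ≤ ((∑ i ∈ Finset.Icc 1 n, ‖X i ω‖₊ : NNReal) : ℝ) := NNReal.coe_le_coe.2 this
        _ = ∑ i ∈ Finset.Icc 1 n, ‖X i ω‖ := by push_cast; rfl
    -- split each norm
    set J : (Fin d → ℕ) → ℝ := fun i => Set.indicator (S i) (fun ω => ‖X i ω‖) ω with hJdef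
    have hJnonneg : ∀ i, 0 ≤ J i := fun i =>
      Set.indicator_nonneg (fun ω _ => norm_nonneg _) ω
    have hsplit : ∀ i, ‖X i ω‖ ≤ min ‖X i ω‖ (a ^ (1 / p)) + J i := by
      intro i
      by_cases h : ω ∈ S i
      · have : J i = ‖X i ω‖ := Set.indicator_of_mem h _
        rw [this]
        have : 0 ≤ min ‖X i ω‖ (a ^ (1 / p)) := le_min (norm_nonneg _) (by positivity)
        linarith
      · have hJ0 : J i = 0 := Set.indicator_of_notMem h _
        have hle : ‖X i ω‖ ^ p ≤ a := not_lt.1 h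
        have : ‖X i ω‖ ≤ a ^ (1 / p) := by
          have h1 := Real.rpow_le_rpow (Real.rpow_nonneg (norm_nonneg _) p) hle
            (by positivity : (0:ℝ) ≤ 1 / p)
          rwa [← Real.rpow_mul (norm_nonneg _), mul_one_div_cancel hp0.ne',
            Real.rpow_one] at h1
        rw [hJ0, min_eq_left this]
        linarith
    set A : ℝ := ∑ i ∈ Finset.Icc 1 n, min ‖X i ω‖ (a ^ (1 / p)) with hAdef
    set B : ℝ := ∑ i ∈ Finset.Icc 1 n, J i with hBdef
    have hA0 : 0 ≤ A := Finset.sum_nonneg fun i _ => le_min (norm_nonneg _) (by positivity)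
    have hB0 : 0 ≤ B := Finset.sum_nonneg fun i _ => hJnonneg i
    have hMAB : M ≤ A + B := by
      calc M ≤ ∑ i ∈ Finset.Icc 1 n, ‖X i ω‖ := hMle
        _ ≤ ∑ i ∈ Finset.Icc 1 n, (min ‖X i ω‖ (a ^ (1 / p)) + J i) :=
            Finset.sum_le_sum fun i _ => hsplit i
        _ = A + B := by rw [Finset.sum_add_distrib]
    -- A bound
    have hcard : ((Finset.Icc (1 : Fin d → ℕ) n).card : ℝ) = m := by
      rw [hmdef, Pi.card_Icc]
      simp [Nat.card_Icc]
    have hAle : A ≤ m * a ^ (1 / p) := by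
      calc A ≤ ∑ _i ∈ Finset.Icc 1 n, a ^ (1 / p) :=
            Finset.sum_le_sum fun i _ => min_le_right _ _
        _ = ((Finset.Icc (1 : Fin d → ℕ) n).card : ℝ) * a ^ (1 / p) := by
            rw [Finset.sum_const, nsmul_eq_mul]
        _ = m * a ^ (1 / p) := by rw [hcard]
    -- the exponent juggling
    have hinvp : (1 / p) * p = 1 := by field_simp
    have hApow : A ^ p ≤ m ^ p * a := by
      calc A ^ p ≤ (m * a ^ (1 / p)) ^ p :=
            Real.rpow_le_rpow hA0 hAle hp0.le
        _ = m ^ p * (a ^ (1 / p)) ^ p := Real.mul_rpow hm0.le (by positivity)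
        _ = m ^ p * a := by
            rw [← Real.rpow_mul ha.le, one_div_mul_cancel hp0.ne', Real.rpow_one]
    have hBpow : B ^ p ≤ ∑ i ∈ Finset.Icc 1 n, ind i ω := by
      calc B ^ p ≤ ∑ i ∈ Finset.Icc 1 n, (J i) ^ p :=
            my_rpow_sum_le hp0 hp1.le _ _ fun i _ => hJnonneg i
        _ = ∑ i ∈ Finset.Icc 1 n, ind i ω := by
            refine Finset.sum_congr rfl fun i _ => ?_
            by_cases h : ω ∈ S i
            · rw [hJdef]; simp only [Set.indicator_of_mem h, hinddef]
            · rw [hJdef]; simp only [Set.indicator_of_notMem h, hinddef,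
                Real.zero_rpow hp0.ne']
    have hMpow : M ^ p ≤ m ^ p * a + ∑ i ∈ Finset.Icc 1 n, ind i ω := by
      calc M ^ p ≤ (A + B) ^ p := Real.rpow_le_rpow hM0 hMAB hp0.le
        _ ≤ A ^ p + B ^ p := my_rpow_add_le hp0.le hp1.le hA0 hB0
        _ ≤ _ := add_le_add hApow hBpow
    have hdenom : (m ^ (1 / p)) ^ p = m := by
      rw [← Real.rpow_mul hm0.le, hinvp, Real.rpow_one]
    have : (M / m ^ (1 / p)) ^ p = M ^ p / m := by
      rw [Real.div_rpow hM0 (Real.rpow_nonneg hm0.le _), hdenom]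
    rw [this]
    rw [hgdef]
    have hmp1 : m ^ (p - 1) = m ^ p / m := Real.rpow_sub_one hm0.ne' p
    rw [div_le_iff₀ hm0]
    calc M ^ p ≤ m ^ p * a + ∑ i ∈ Finset.Icc 1 n, ind i ω := hMpow
      _ = (a * m ^ (p - 1) + (1 / m) * ∑ i ∈ Finset.Icc 1 n, ind i ω) * m := by
          rw [hmp1]; field_simp
  -- integrate
  have hfnonneg : ∀ ω, 0 ≤
      ((((Finset.Icc 1 n).sup fun k =>
          ‖∑ i ∈ Finset.Icc 1 k, X i ω‖₊ : NNReal) : ℝ) / m ^ (1 / p)) ^ p := fun ω =>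
    Real.rpow_nonneg (div_nonneg (NNReal.coe_nonneg _) (Real.rpow_nonneg hm0.le _)) p
  have hIle : ∫ ω, ((((Finset.Icc 1 n).sup fun k =>
          ‖∑ i ∈ Finset.Icc 1 k, X i ω‖₊ : NNReal) : ℝ) / m ^ (1 / p)) ^ p ∂P ≤
      ∫ ω, g ω ∂P :=
    integral_mono_of_nonneg (Filter.Eventually.of_forall hfnonneg) hgInt
      (Filter.Eventually.of_forall hptwise)
  have hIg : ∫ ω, g ω ∂P = a * m ^ (p - 1) +
      (1 / m) * ∑ i ∈ Finset.Icc 1 n, ∫ ω, ind i ω ∂P := by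
    rw [hgdef]
    rw [integral_add (integrable_const _)
      ((integrable_finset_sum _ (fun i _ => hindInt i)).const_mul _)]
    rw [integral_const, integral_const_mul, integral_finset_sum _ (fun i _ => hindInt i)]
    simp
  have hUIbound : (1 / m) * ∑ i ∈ Finset.Icc 1 n, ∫ ω, ind i ω ∂P ≤ ε / 2 :=
    hUIa a (le_refl a) n hn
  calc ∫ ω, ((((Finset.Icc 1 n).sup fun k =>
          ‖∑ i ∈ Finset.Icc 1 k, X i ω‖₊ : NNReal) : ℝ) / m ^ (1 / p)) ^ p ∂P
      ≤ ∫ ω, g ω ∂P := hIle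
    _ = a * m ^ (p - 1) + (1 / m) * ∑ i ∈ Finset.Icc 1 n, ∫ ω, ind i ω ∂P := hIg
    _ < ε / 2 + ε / 2 := by
        have := hsmall
        have := hUIbound
        linarith [hsmall, hUIbound]
    _ = ε := by ring
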